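/- For the chordless cycle on ℓ ≥ 5 odd vertices x₁, ..., x_ℓ, the map ψ assigning to each x_i the set of clique vertices {i, i+1, ..., i+λ−2} (indices mod 2λ−1, where λ = (ℓ+1)/2) is a valid (2λ−1)-clique embedding into the cycle hypergraph whose hyperedges are the consecutive pairs {x_i, x_{i+1}} (cyclically), and every hyperedge has weak edge depth at most λ, which is strictly less than 2λ−1. -/

import Mathlib

variable {V : Type*}

/-- The vertex set `W` induces a connected subhypergraph of the hypergraph with
hyperedges `E`: any two vertices of `W` are linked by a path stepping through
hyperedges restricted to `W`. -/
def InducesConnected (E : Set (Set V)) (W : Set V) : Prop :=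
  ∀ u ∈ W, ∀ v ∈ W,
    Relation.ReflTransGen (fun a b => a ∈ W ∧ b ∈ W ∧ ∃ K ∈ E, a ∈ K ∧ b ∈ K) u v

/-- A clique embedding of the clique on index type `I` into the hypergraph with
hyperedges `E`: each clique vertex maps to a nonempty connected set of vertices,
and any two images either intersect or are joined by a hyperedge touching both. -/
def IsCliqueEmbedding {I : Type*} (E : Set (Set V)) (ψ : I → Set V) : Prop :=
  (∀ c, (ψ c).Nonempty) ∧
  (∀ c, InducesConnected E (ψ c)) ∧
  (∀ c d : I, c ≠ d →
    (ψ c ∩ ψ d).Nonempty ∨ ∃ K ∈ E, (K ∩ ψ c).Nonempty ∧ (K ∩ ψ d).Nonempty)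

/-- For the chordless cycle on `ℓ ≥ 5` (odd) vertices, with `λ = (ℓ+1)/2`, the map
sending clique vertex `c` to the set of cycle vertices `j` whose window
`{j, j+1, …, j+λ−2}` (mod `ℓ`) contains `c` is a valid `(2λ−1)`-clique embedding
into the cycle hypergraph with hyperedges `{i, i+1}`, and every hyperedge has weak
edge depth at most `λ`, which is strictly less than `2λ−1`. -/
theorem cycle_clique_embedding (l lam : ℕ) (hl : 5 ≤ l) (hodd : Odd l)
    (hlam : lam = (l + 1) / 2) :
    IsCliqueEmbedding
        ({K : Set (ZMod l) | ∃ i : ZMod l, K = {i, i + 1}})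
        (fun c : ZMod l => {j : ZMod l | ∃ t : ℕ, t ≤ lam - 2 ∧ c = j + (t : ZMod l)}) ∧
      (∀ K ∈ ({K : Set (ZMod l) | ∃ i : ZMod l, K = {i, i + 1}}),
        Nat.card {c : ZMod l |
          (({j : ZMod l | ∃ t : ℕ, t ≤ lam - 2 ∧ c = j + (t : ZMod l)}) ∩ K).Nonempty}
          ≤ lam) ∧
      lam < 2 * lam - 1 := by
  haveI : NeZero l := ⟨by omega⟩
  obtain ⟨m, hm⟩ := hodd
  have hlam3 : 3 ≤ lam := by omega
  have hll : l = 2 * lam - 1 := by omega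
  set ψ : ZMod l → Set (ZMod l) :=
    fun c => {j : ZMod l | ∃ t : ℕ, t ≤ lam - 2 ∧ c = j + (t : ZMod l)} with hψ
  set E : Set (Set (ZMod l)) := {K : Set (ZMod l) | ∃ i : ZMod l, K = {i, i + 1}} with hE
  -- basic membership facts
  have hmem : ∀ (c : ZMod l) (t : ℕ), t ≤ lam - 2 → c - (t : ZMod l) ∈ ψ c := by
    intro c t ht
    exact ⟨t, ht, by ring⟩
  have hself : ∀ c : ZMod l, c ∈ ψ c := by
    intro c
    have := hmem c 0 (by omega)
    simpa using this
  -- the auxiliary pairwise lemma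
  have haux : ∀ c d : ZMod l, 1 ≤ (d - c).val → (d - c).val ≤ lam - 1 →
      ((ψ c ∩ ψ d).Nonempty ∨ ∃ K ∈ E, (K ∩ ψ c).Nonempty ∧ (K ∩ ψ d).Nonempty) := by
    intro c d h1 h2
    have hdc : (((d - c).val : ℕ) : ZMod l) = d - c := ZMod.natCast_rightInverse (d - c)
    have hd : d = c + (((d - c).val : ℕ) : ZMod l) := by rw [hdc]; ring
    by_cases hk : (d - c).val ≤ lam - 2
    · left
      refine ⟨c, hself c, ⟨(d - c).val, hk, ?_⟩⟩
      exact hd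
    · -- (d - c).val = lam - 1
      have hk' : (d - c).val = lam - 1 := by omega
      right
      refine ⟨{c, c + 1}, ⟨c, rfl⟩, ⟨c, Or.inl rfl, hself c⟩, ⟨c + 1, Or.inr rfl, ?_⟩⟩
      refine ⟨lam - 2, le_refl _, ?_⟩
      have hnat : (lam - 1 : ℕ) = (lam - 2) + 1 := by omega
      rw [hd, hk', hnat]
      push_cast
      ring
  refine ⟨⟨?_, ?_, ?_⟩, ?_, by omega⟩
  · -- nonempty
    intro c
    exact ⟨c, hself c⟩
  · -- connected
    intro c
    set r : ZMod l → ZMod l → Prop :=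
      fun a b => a ∈ ψ c ∧ b ∈ ψ c ∧ ∃ K ∈ E, a ∈ K ∧ b ∈ K with hr
    have hsymm : Symmetric r := by
      rintro a b ⟨ha, hb, K, hK, haK, hbK⟩
      exact ⟨hb, ha, K, hK, hbK, haK⟩
    have hpath : ∀ t : ℕ, t ≤ lam - 2 → Relation.ReflTransGen r (c - (t : ZMod l)) c := by
      intro t
      induction t with
      | zero =>
        intro _
        simpa using Relation.ReflTransGen.refl (a := c)
      | succ n ih =>
        intro hn
        have hn' : n ≤ lam - 2 := by omega
        refine Relation.ReflTransGen.head ?_ (ih hn')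
        exact ⟨hmem c (n + 1) hn, hmem c n hn', ⟨{c - ((n + 1 : ℕ) : ZMod l),
          c - ((n + 1 : ℕ) : ZMod l) + 1}, ⟨c - ((n + 1 : ℕ) : ZMod l), rfl⟩,
          Or.inl rfl, Or.inr (Set.mem_singleton_iff.mpr (by push_cast; ring))⟩⟩
    intro u hu v hv
    obtain ⟨t₁, ht₁, he₁⟩ := hu
    obtain ⟨t₂, ht₂, he₂⟩ := hv
    have hu' : u = c - (t₁ : ZMod l) := by rw [he₁]; ring
    have hv' : v = c - (t₂ : ZMod l) := by rw [he₂]; ring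
    have p1 : Relation.ReflTransGen r u c := by rw [hu']; exact hpath t₁ ht₁
    have p2 : Relation.ReflTransGen r c v := by
      rw [hv']
      exact (haveI : Std.Symm r := ⟨fun _ _ h => hsymm h⟩; Std.Symm.symm (r := Relation.ReflTransGen r) _ _ (hpath t₂ ht₂))
    exact p1.trans p2
  · -- pairwise
    intro c d hne
    have h1 : (d - c).val ≠ 0 := by
      intro h
      exact hne (by have := (ZMod.val_eq_zero _).1 h; rw [sub_eq_zero] at this; exact this.symm)
    have h2 : (c - d).val ≠ 0 := by
      intro h
      exact hne (by have := (ZMod.val_eq_zero _).1 h; rw [sub_eq_zero] at this; exact this)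
    have hv1 : (d - c).val < l := ZMod.val_lt _
    have hneg : c - d = -(d - c) := by ring
    have hv2 : (c - d).val = l - (d - c).val := by
      rw [hneg, ZMod.neg_val,
        if_neg (show ¬ d - c = 0 from fun h => hne (by rw [sub_eq_zero] at h; exact h.symm))]
    by_cases hcase : (d - c).val ≤ lam - 1
    · exact haux c d (by omega) hcase
    · have : (c - d).val ≤ lam - 1 := by omega
      rcases haux d c (by omega) this with h | ⟨K, hK, hKd, hKc⟩
      · left
        exact ⟨h.choose, h.choose_spec.2, h.choose_spec.1⟩
      · right
        exact ⟨K, hK, hKc, hKd⟩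
  · -- depth
    rintro K ⟨i, rfl⟩
    have hset : {c : ZMod l | (ψ c ∩ {i, i + 1}).Nonempty} =
        ↑((Finset.range lam).image (fun s : ℕ => i + (s : ZMod l))) := by
      ext c
      simp only [Set.mem_setOf_eq, Finset.coe_image, Set.mem_image, Finset.mem_coe,
        Finset.mem_range]
      constructor
      · rintro ⟨j, ⟨t, ht, hct⟩, hj⟩
        rcases hj with hj | hj
        · exact ⟨t, by omega, by rw [hct, hj]⟩
        · refine ⟨t + 1, by omega, ?_⟩
          rw [hct, hj]
          push_cast
          ring
      · rintro ⟨s, hs, rfl⟩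
        by_cases hsle : s ≤ lam - 2
        · exact ⟨i, ⟨s, hsle, rfl⟩, Or.inl rfl⟩
        · have hs' : s = lam - 1 := by omega
          refine ⟨i + 1, ⟨lam - 2, le_refl _, ?_⟩, Or.inr rfl⟩
          have hnat : (lam - 1 : ℕ) = (lam - 2) + 1 := by omega
          rw [hs', hnat]
          push_cast
          ring
    rw [hset, Nat.card_coe_set_eq, Set.ncard_coe_finset]
    calc ((Finset.range lam).image (fun s : ℕ => i + (s : ZMod l))).card
        ≤ (Finset.range lam).card := Finset.card_image_le
      _ = lam := Finset.card_range lam
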